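/- (Newton polygon root count) Let F(z) = Σ_{i≥1} b_i z^i be a nonzero power series with coefficients in O_p ⊆ C_p, and suppose F has at least n distinct roots in C_p, all of the same absolute value ρ with 0 < ρ < 1, where b_1 ≠ 0. Then ρ^n ≥ |b_1|. -/

import Mathlib

/-- Evaluation of the power series with coefficients `b` at `z`. -/
noncomputable def evalPS {K : Type*} [NormedField K] (b : ℕ → K) (z : K) : K :=
  ∑' i, b i * z ^ i

open Filter Finset

section Aux

variable {K : Type*} [NormedField K] [IsUltrametricDist K] [CompleteSpace K]

lemma stmt8_summable_aux (b : ℕ → K) (hb : ∀ i, ‖b i‖ ≤ 1) {w : K} (hw : ‖w‖ < 1) :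
    Summable fun i => b i * w ^ i := by
  apply NonarchimedeanAddGroup.summable_of_tendsto_cofinite_zero
  rw [Nat.cofinite_eq_atTop]
  refine squeeze_zero_norm (fun i => ?_)
    (tendsto_pow_atTop_nhds_zero_of_lt_one (norm_nonneg w) hw)
  rw [norm_mul, norm_pow]
  exact mul_le_of_le_one_left (pow_nonneg (norm_nonneg w) i) (hb i)

lemma stmt8_summable_prod_aux (b : ℕ → K) (hb : ∀ i, ‖b i‖ ≤ 1) {y w : K}
    (hy : ‖y‖ < 1) (hw : ‖w‖ < 1) :
    Summable fun p : ℕ × ℕ => b (p.1 + p.2 + 1) * w ^ p.1 * y ^ p.2 := by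
  apply NonarchimedeanAddGroup.summable_of_tendsto_cofinite_zero
  set r : ℝ := max ‖w‖ ‖y‖ with hr
  have hr0 : 0 ≤ r := le_trans (norm_nonneg w) (le_max_left _ _)
  have hr1 : r < 1 := max_lt hw hy
  have hbound : ∀ p : ℕ × ℕ, ‖b (p.1 + p.2 + 1) * w ^ p.1 * y ^ p.2‖ ≤ r ^ (p.1 + p.2) := by
    intro p
    rw [norm_mul, norm_mul, norm_pow, norm_pow, pow_add]
    have h1 : ‖w‖ ^ p.1 ≤ r ^ p.1 := pow_le_pow_left₀ (norm_nonneg w) (le_max_left _ _) _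
    have h2 : ‖y‖ ^ p.2 ≤ r ^ p.2 := pow_le_pow_left₀ (norm_nonneg y) (le_max_right _ _) _
    calc ‖b (p.1 + p.2 + 1)‖ * ‖w‖ ^ p.1 * ‖y‖ ^ p.2
        ≤ 1 * r ^ p.1 * r ^ p.2 := by
          gcongr <;>
            first
              | exact hb _
              | exact le_max_left _ _
              | exact le_max_right _ _
              | exact hr0
              | exact norm_nonneg _
      _ = r ^ p.1 * r ^ p.2 := by ring
  rw [Metric.tendsto_nhds]
  intro ε hε
  obtain ⟨N, hN⟩ := exists_pow_lt_of_lt_one hε hr1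
  rw [Filter.eventually_cofinite]
  apply Set.Finite.subset ((Finset.range N ×ˢ Finset.range N).finite_toSet)
  intro p hp
  simp only [Set.mem_setOf_eq, not_lt, dist_zero_right] at hp
  simp only [Finset.coe_product, Set.mem_prod, Finset.mem_coe, Finset.mem_range]
  by_contra hcon
  push_neg at hcon
  have hNle : N ≤ p.1 + p.2 := by
    rcases le_or_gt N p.1 with h | h
    · omega
    · have := hcon h; omega
  have : r ^ (p.1 + p.2) ≤ r ^ N := pow_le_pow_of_le_one hr0 hr1.le hNle
  have := le_trans hp (le_trans (hbound p) this)
  linarith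

lemma stmt8_eval_shift (b : ℕ → K) (h0 : b 0 = 0) (hb : ∀ i, ‖b i‖ ≤ 1) {w : K}
    (hw : ‖w‖ < 1) :
    ∑' n, b (n + 1) * w ^ (n + 1) = evalPS b w := by
  rw [evalPS, Summable.tsum_eq_zero_add (stmt8_summable_aux b hb hw), h0]
  simp

set_option maxHeartbeats 1000000 in
lemma stmt8_factor (b : ℕ → K) (h0 : b 0 = 0) (hb : ∀ i, ‖b i‖ ≤ 1) {y w : K}
    (hy : ‖y‖ < 1) (hw : ‖w‖ < 1) :
    (w - y) * evalPS (fun j => ∑' i, b (j + i + 1) * y ^ i) w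
      = evalPS b w - evalPS b y := by
  set f : ℕ × ℕ → K := fun p => b (p.1 + p.2 + 1) * w ^ p.1 * y ^ p.2 with hfdef
  have hf : Summable f := stmt8_summable_prod_aux b hb hy hw
  have hinner : ∀ j : ℕ, Summable fun i => f (j, i) := by
    intro j
    have h := ((stmt8_summable_aux (fun i => b (j + i + 1)) (fun i => hb _) hy).mul_left
      (w ^ j))
    exact h.congr fun i => by simp only [hfdef]; ring
  have h1 : evalPS (fun j => ∑' i, b (j + i + 1) * y ^ i) w = ∑' p : ℕ × ℕ, f p := by
    rw [Summable.tsum_prod' hf hinner, evalPS]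
    refine tsum_congr fun j => ?_
    have : ∀ i : ℕ, f (j, i) = w ^ j * (b (j + i + 1) * y ^ i) := fun i => by
      simp only [hfdef]; ring
    rw [tsum_congr this, tsum_mul_left, mul_comm]
  have h2 : ∑' p : ℕ × ℕ, f p
      = ∑' n : ℕ, b (n + 1) * ∑ kl ∈ Finset.HasAntidiagonal.antidiagonal n, w ^ kl.1 * y ^ kl.2 := by
    calc ∑' p : ℕ × ℕ, f p
        = ∑' x : Σ n : ℕ, (Finset.HasAntidiagonal.antidiagonal n : Finset (ℕ × ℕ)),
            f (Finset.HasAntidiagonal.sigmaAntidiagonalEquivProd x) :=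
          (Finset.HasAntidiagonal.sigmaAntidiagonalEquivProd.tsum_eq f).symm
      _ = ∑' (n : ℕ) (c : (Finset.HasAntidiagonal.antidiagonal n : Finset (ℕ × ℕ))),
            f (Finset.HasAntidiagonal.sigmaAntidiagonalEquivProd ⟨n, c⟩) :=
          Summable.tsum_sigma' (fun n => (hasSum_fintype _).summable)
            (Finset.HasAntidiagonal.sigmaAntidiagonalEquivProd.summable_iff.mpr hf)
      _ = ∑' n : ℕ, b (n + 1) * ∑ kl ∈ Finset.HasAntidiagonal.antidiagonal n, w ^ kl.1 * y ^ kl.2 := by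
          refine tsum_congr fun n => ?_
          rw [tsum_fintype]
          rw [show (∑ c : (Finset.HasAntidiagonal.antidiagonal n : Finset (ℕ × ℕ)),
              f (Finset.HasAntidiagonal.sigmaAntidiagonalEquivProd ⟨n, c⟩))
              = ∑ kl ∈ Finset.HasAntidiagonal.antidiagonal n, f kl from
            Finset.sum_coe_sort (Finset.HasAntidiagonal.antidiagonal n) f]
          rw [Finset.mul_sum]
          refine Finset.sum_congr rfl fun kl hkl => ?_
          rw [Finset.HasAntidiagonal.mem_antidiagonal] at hkl
          simp only [hfdef, hkl]
          ring
  rw [h1, h2, ← tsum_mul_left]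
  have h3 : ∀ n : ℕ,
      (w - y) * (b (n + 1) * ∑ kl ∈ Finset.HasAntidiagonal.antidiagonal n, w ^ kl.1 * y ^ kl.2)
        = b (n + 1) * w ^ (n + 1) - b (n + 1) * y ^ (n + 1) := by
    intro n
    have hgeo : (∑ i ∈ Finset.range (n + 1), w ^ i * y ^ (n + 1 - 1 - i)) * (w - y)
        = w ^ (n + 1) - y ^ (n + 1) := geom_sum₂_mul w y (n + 1)
    have hanti : ∑ kl ∈ Finset.HasAntidiagonal.antidiagonal n, w ^ kl.1 * y ^ kl.2
        = ∑ i ∈ Finset.range (n + 1), w ^ i * y ^ (n - i) :=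
      Finset.Nat.sum_antidiagonal_eq_sum_range_succ (fun a b => w ^ a * y ^ b) n
    simp only [Nat.succ_sub_one] at hgeo
    rw [hanti, mul_comm (w - y), mul_assoc, hgeo]
    ring
  rw [tsum_congr h3]
  have hsw : Summable fun n => b (n + 1) * w ^ (n + 1) :=
    (summable_nat_add_iff (f := fun i => b i * w ^ i) 1).mpr (stmt8_summable_aux b hb hw)
  have hsy : Summable fun n => b (n + 1) * y ^ (n + 1) :=
    (summable_nat_add_iff (f := fun i => b i * y ^ i) 1).mpr (stmt8_summable_aux b hb hy)
  rw [Summable.tsum_sub hsw hsy, stmt8_eval_shift b h0 hb hw, stmt8_eval_shift b h0 hb hy]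

lemma stmt8_key (ρ : ℝ) (hρ0 : 0 < ρ) (hρ1 : ρ < 1) :
    ∀ (n : ℕ) (b : ℕ → K), b 0 = 0 → (∀ i, ‖b i‖ ≤ 1) → ∀ S : Finset K, n ≤ S.card →
      (∀ y ∈ S, ‖y‖ = ρ ∧ evalPS b y = 0) → ‖b 1‖ ≤ ρ ^ n := by
  intro n
  induction n with
  | zero => intro b _ hb S _ _; simpa using hb 1
  | succ n ih =>
    intro b h0 hb S hcard hroots
    classical
    obtain ⟨y, hy⟩ : S.Nonempty := Finset.card_pos.mp (by omega)
    obtain ⟨hyn, hyr⟩ := hroots y hy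
    have hylt : ‖y‖ < 1 := by rw [hyn]; exact hρ1
    have hy0 : y ≠ 0 := by
      intro h
      rw [h, norm_zero] at hyn
      linarith
    set c : ℕ → K := fun j => ∑' i, b (j + i + 1) * y ^ i with hc
    have hc_norm : ∀ j, ‖c j‖ ≤ 1 := by
      intro j
      refine IsUltrametricDist.norm_tsum_le_of_forall_le_of_nonneg zero_le_one fun i => ?_
      rw [norm_mul, norm_pow]
      exact mul_le_one₀ (hb _) (pow_nonneg (norm_nonneg y) i)
        (pow_le_one₀ (norm_nonneg y) hylt.le)
    have hc0 : c 0 = 0 := by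
      have h1 : y * c 0 = 0 := by
        calc y * c 0 = ∑' i, b (i + 1) * y ^ (i + 1) := by
              rw [hc, ← tsum_mul_left]
              exact tsum_congr fun i => by rw [zero_add]; ring
          _ = evalPS b y := stmt8_eval_shift b h0 hb hylt
          _ = 0 := hyr
      exact (mul_eq_zero.mp h1).resolve_left hy0
    have hsum1 : Summable fun i => b (i + 1) * y ^ i :=
      stmt8_summable_aux (fun i => b (i + 1)) (fun i => hb _) hylt
    have hb1c : b 1 = -(y * c 1) := by
      have heq : c 0 = b 1 + y * c 1 := by
        rw [hc]
        simp only [zero_add]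
        rw [Summable.tsum_eq_zero_add hsum1]
        congr 1
        · simp
        · rw [← tsum_mul_left]
          exact tsum_congr fun i => by ring_nf
      rw [hc0] at heq
      linear_combination -heq
    have hroots' : ∀ w ∈ S.erase y, ‖w‖ = ρ ∧ evalPS c w = 0 := by
      intro w hw
      obtain ⟨hwne, hwS⟩ := Finset.mem_erase.mp hw
      obtain ⟨hwn, hwr⟩ := hroots w hwS
      refine ⟨hwn, ?_⟩
      have hwlt : ‖w‖ < 1 := by rw [hwn]; exact hρ1
      have hfact := stmt8_factor b h0 hb hylt hwlt
      rw [← hc, hwr, hyr, sub_zero] at hfact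
      have hwy : w - y ≠ 0 := sub_ne_zero.mpr hwne
      exact (mul_eq_zero.mp hfact).resolve_left hwy
    have hcard' : n ≤ (S.erase y).card := by
      rw [Finset.card_erase_of_mem hy]; omega
    have hIH := ih c hc0 hc_norm (S.erase y) hcard' hroots'
    calc ‖b 1‖ = ρ * ‖c 1‖ := by rw [hb1c, norm_neg, norm_mul, hyn]
      _ ≤ ρ * ρ ^ n := mul_le_mul_of_nonneg_left hIH hρ0.le
      _ = ρ ^ (n + 1) := (pow_succ' ρ n).symm

end Aux

/-- Newton polygon root count: let `F(z) = Σ_{i≥1} b_i z^i` be a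
nonzero power series with coefficients in `O_p`, with `b_1 ≠ 0`, having at
least `n` distinct roots in `ℂ_p`, all of the same absolute value `ρ` with
`0 < ρ < 1`.  Then `ρ^n ≥ ‖b_1‖`. -/
theorem stmt8 {K : Type*} [NormedField K] [IsUltrametricDist K] [CompleteSpace K]
    [IsAlgClosed K]
    (b : ℕ → K) (h0 : b 0 = 0) (hb : ∀ i, ‖b i‖ ≤ 1) (hb1 : b 1 ≠ 0)
    (ρ : ℝ) (hρ0 : 0 < ρ) (hρ1 : ρ < 1)
    (n : ℕ) (S : Finset K) (hcard : n ≤ S.card)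
    (hroots : ∀ y ∈ S, ‖y‖ = ρ ∧ evalPS b y = 0) :
    ‖b 1‖ ≤ ρ ^ n :=
  stmt8_key ρ hρ0 hρ1 n b h0 hb S hcard hroots
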